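/- Let S and A be finite nonempty sets, let p : S × A × S → ℝ satisfy p(s'|s,a) ≥ 0 and ∑_{s'} p(s'|s,a) = 1 for all (s,a), let r : S × A → ℝ, let γ ∈ [0,1), and let π₀ : S × A → ℝ satisfy π₀(a|s) > 0 and ∑_a π₀(a|s) = 1 for every s. For w > 0 let Q*_w denote the unique fixed point of the soft Bellman operator B_w[Q](s,a) = r(s,a) + γ·∑_{s'} p(s'|s,a)·w·log(∑_{a'} π₀(a'|s')·exp(Q(s',a')/w)), and let Q* denote the unique fixed point of the hard Bellman optimality operator B[Q](s,a) = r(s,a) + γ·∑_{s'} p(s'|s,a)·max_{a'} Q(s',a'). Then Q*_w converges to Q* in the sup norm as w → 0⁺; that is, for every ε > 0 there exists δ > 0 such that 0 < w < δ implies max_{(s,a)} |Q*_w(s,a) − Q*(s,a)| ≤ ε. -/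

import Mathlib

section AuxSoftBellman
open Finset Real

lemma aux_abs_sup'_sub_sup'_le {A : Type*} [Fintype A] [Nonempty A] (f g : A → ℝ) (D : ℝ)
    (h : ∀ a, |f a - g a| ≤ D) :
    |Finset.univ.sup' Finset.univ_nonempty f - Finset.univ.sup' Finset.univ_nonempty g| ≤ D := by
  rw [abs_sub_le_iff]
  constructor
  · rw [sub_le_iff_le_add]
    apply Finset.sup'_le
    intro a _
    have := (abs_le.mp (h a)).2
    have hg : g a ≤ Finset.univ.sup' Finset.univ_nonempty g :=
      Finset.le_sup' _ (Finset.mem_univ a)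
    linarith
  · rw [sub_le_iff_le_add]
    apply Finset.sup'_le
    intro a _
    have := (abs_le.mp (h a)).1
    have hf : f a ≤ Finset.univ.sup' Finset.univ_nonempty f :=
      Finset.le_sup' _ (Finset.mem_univ a)
    linarith

/-- Mellowmax bounds: for w > 0 and positive weights summing to 1 with min ≥ c,
M + w log c ≤ w log (∑ pr exp(Q/w)) ≤ M where M = max Q. -/
lemma aux_mellow_bounds {A : Type*} [Fintype A] [Nonempty A]
    (pr : A → ℝ) (hprpos : ∀ a, 0 < pr a) (hprsum : ∑ a, pr a = 1)
    (c : ℝ) (hcpos : 0 < c) (hc : ∀ a, c ≤ pr a)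
    (Q : A → ℝ) (w : ℝ) (hw : 0 < w) :
    Finset.univ.sup' Finset.univ_nonempty Q + w * Real.log c ≤
      w * Real.log (∑ a, pr a * Real.exp (Q a / w)) ∧
    w * Real.log (∑ a, pr a * Real.exp (Q a / w)) ≤
      Finset.univ.sup' Finset.univ_nonempty Q := by
  set M := Finset.univ.sup' Finset.univ_nonempty Q with hM
  have hsumpos : 0 < ∑ a, pr a * Real.exp (Q a / w) :=
    Finset.sum_pos (fun a _ => mul_pos (hprpos a) (Real.exp_pos _)) Finset.univ_nonempty
  obtain ⟨a0, _, ha0⟩ := Finset.exists_mem_eq_sup' Finset.univ_nonempty Q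
  constructor
  · -- lower bound
    have hge : c * Real.exp (M / w) ≤ ∑ a, pr a * Real.exp (Q a / w) := by
      calc c * Real.exp (M / w) ≤ pr a0 * Real.exp (Q a0 / w) := by
            rw [← hM] at ha0; rw [ha0]
            exact mul_le_mul_of_nonneg_right (hc a0) (Real.exp_pos _).le
        _ ≤ ∑ a, pr a * Real.exp (Q a / w) := by
            apply Finset.single_le_sum (f := fun a => pr a * Real.exp (Q a / w))
              (fun a _ => (mul_pos (hprpos a) (Real.exp_pos _)).le) (Finset.mem_univ a0)
    have := Real.log_le_log (mul_pos hcpos (Real.exp_pos _)) hge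
    rw [Real.log_mul hcpos.ne' (Real.exp_pos _).ne', Real.log_exp] at this
    have h2 : w * (Real.log c + M / w) ≤ w * Real.log (∑ a, pr a * Real.exp (Q a / w)) :=
      mul_le_mul_of_nonneg_left this hw.le
    rw [mul_add, mul_div_cancel₀ _ hw.ne'] at h2
    linarith
  · -- upper bound
    have hle : ∑ a, pr a * Real.exp (Q a / w) ≤ Real.exp (M / w) := by
      calc ∑ a, pr a * Real.exp (Q a / w) ≤ ∑ a, pr a * Real.exp (M / w) := by
            apply Finset.sum_le_sum
            intro a _
            apply mul_le_mul_of_nonneg_left _ (hprpos a).le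
            apply Real.exp_le_exp.mpr
            gcongr
            exact Finset.le_sup' Q (Finset.mem_univ a)
        _ = Real.exp (M / w) := by rw [← Finset.sum_mul, hprsum, one_mul]
    have := Real.log_le_log hsumpos hle
    rw [Real.log_exp] at this
    have h2 := mul_le_mul_of_nonneg_left this hw.le
    rwa [mul_div_cancel₀ _ hw.ne'] at h2

end AuxSoftBellman


/-- The soft (mellowmax) Bellman operator with transition kernel `p`, reward `r`,
discount `γ`, prior `π₀` and temperature `w`. -/
noncomputable def softBellman {S A : Type*} [Fintype S] [Fintype A] [Nonempty A]
    (p : S → A → S → ℝ) (r : S → A → ℝ) (γ : ℝ) (π₀ : S → A → ℝ) (w : ℝ)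
    (Q : S → A → ℝ) : S → A → ℝ :=
  fun s a => r s a +
    γ * ∑ s', p s a s' * (w * Real.log (∑ a', π₀ s' a' * Real.exp (Q s' a' / w)))

/-- The hard Bellman optimality operator. -/
noncomputable def hardBellman {S A : Type*} [Fintype S] [Fintype A] [Nonempty A]
    (p : S → A → S → ℝ) (r : S → A → ℝ) (γ : ℝ)
    (Q : S → A → ℝ) : S → A → ℝ :=
  fun s a => r s a +
    γ * ∑ s', p s a s' * Finset.univ.sup' Finset.univ_nonempty (fun a' => Q s' a')

/-- The soft-optimal fixed point converges in sup norm to the optimal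
fixed point of the hard Bellman operator as the temperature tends to 0 from the right. -/
theorem softFixedPoint_tendsto_hardFixedPoint
    {S A : Type*} [Fintype S] [Fintype A] [Nonempty S] [Nonempty A]
    (p : S → A → S → ℝ) (hp_nonneg : ∀ s a s', 0 ≤ p s a s')
    (hp_sum : ∀ s a, ∑ s', p s a s' = 1)
    (r : S → A → ℝ) (γ : ℝ) (hγ0 : 0 ≤ γ) (hγ1 : γ < 1)
    (π₀ : S → A → ℝ) (hπpos : ∀ s a, 0 < π₀ s a) (hπsum : ∀ s, ∑ a, π₀ s a = 1)
    (Qw : ℝ → S → A → ℝ)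
    (hQw : ∀ w : ℝ, 0 < w → softBellman p r γ π₀ w (Qw w) = Qw w)
    (Qstar : S → A → ℝ) (hQstar : hardBellman p r γ Qstar = Qstar) :
    ∀ ε > (0 : ℝ), ∃ δ > (0 : ℝ), ∀ w : ℝ, 0 < w → w < δ →
      Finset.univ.sup' Finset.univ_nonempty
        (fun sa : S × A => |Qw w sa.1 sa.2 - Qstar sa.1 sa.2|) ≤ ε := by
  intro ε hε
  -- minimum prior probability
  set c := Finset.univ.inf' Finset.univ_nonempty (fun sa : S × A => π₀ sa.1 sa.2) with hcdef
  have hcpos : 0 < c := by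
    apply (Finset.lt_inf'_iff _).mpr
    intro sa _
    exact hπpos sa.1 sa.2
  have hcle : ∀ s a, c ≤ π₀ s a := fun s a =>
    Finset.inf'_le (fun sa : S × A => π₀ sa.1 sa.2) (Finset.mem_univ (s, a))
  have hc1 : c ≤ 1 := by
    obtain ⟨sa, _, hsa⟩ := Finset.exists_mem_eq_inf' (Finset.univ_nonempty)
      (fun sa : S × A => π₀ sa.1 sa.2)
    rw [hcdef, hsa]
    calc π₀ sa.1 sa.2 ≤ ∑ a, π₀ sa.1 a :=
          Finset.single_le_sum (fun a _ => (hπpos sa.1 a).le) (Finset.mem_univ sa.2)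
      _ = 1 := hπsum sa.1
  set K := -Real.log c with hKdef
  have hK0 : 0 ≤ K := by
    have := Real.log_nonpos hcpos.le hc1
    linarith
  refine ⟨ε * (1 - γ) / (K + 1), div_pos (mul_pos hε (by linarith)) (by linarith), ?_⟩
  intro w hw hwδ
  set D := Finset.univ.sup' Finset.univ_nonempty
    (fun sa : S × A => |Qw w sa.1 sa.2 - Qstar sa.1 sa.2|) with hDdef
  -- key pointwise bound on the difference of the two "value" terms at each s'
  have key : ∀ s' : S,
      |w * Real.log (∑ a', π₀ s' a' * Real.exp (Qw w s' a' / w)) -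
        Finset.univ.sup' Finset.univ_nonempty (fun a' => Qstar s' a')| ≤ D + w * K := by
    intro s'
    obtain ⟨hlo, hhi⟩ := aux_mellow_bounds (π₀ s') (hπpos s') (hπsum s') c hcpos
      (hcle s') (Qw w s') w hw
    have hsup : |Finset.univ.sup' Finset.univ_nonempty (fun a' => Qw w s' a') -
        Finset.univ.sup' Finset.univ_nonempty (fun a' => Qstar s' a')| ≤ D := by
      apply aux_abs_sup'_sub_sup'_le
      intro a'
      exact Finset.le_sup' (f := fun sa : S × A => |Qw w sa.1 sa.2 - Qstar sa.1 sa.2|)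
        (Finset.mem_univ (s', a'))
    have hmm : |w * Real.log (∑ a', π₀ s' a' * Real.exp (Qw w s' a' / w)) -
        Finset.univ.sup' Finset.univ_nonempty (fun a' => Qw w s' a')| ≤ w * K := by
      rw [abs_le]
      constructor
      · have : w * K = -(w * Real.log c) := by rw [hKdef]; ring
        rw [this]
        have := hlo
        linarith
      · have := hhi
        have : w * Real.log (∑ a', π₀ s' a' * Real.exp (Qw w s' a' / w)) -
            Finset.univ.sup' Finset.univ_nonempty (fun a' => Qw w s' a') ≤ 0 := by linarith
        have hwK : 0 ≤ w * K := mul_nonneg hw.le hK0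
        linarith
    have htri := abs_sub_le (w * Real.log (∑ a', π₀ s' a' * Real.exp (Qw w s' a' / w)))
      (Finset.univ.sup' Finset.univ_nonempty (fun a' => Qw w s' a'))
      (Finset.univ.sup' Finset.univ_nonempty (fun a' => Qstar s' a'))
    linarith
  have hD : D ≤ γ * (D + w * K) := by
    apply Finset.sup'_le
    intro sa _
    obtain ⟨s, a⟩ := sa
    have h1 : softBellman p r γ π₀ w (Qw w) s a = Qw w s a := by rw [hQw w hw]
    have h2 : hardBellman p r γ Qstar s a = Qstar s a := by rw [hQstar]
    simp only [softBellman] at h1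
    simp only [hardBellman] at h2
    have hdiff : Qw w s a - Qstar s a =
        γ * ∑ s', p s a s' *
          (w * Real.log (∑ a', π₀ s' a' * Real.exp (Qw w s' a' / w)) -
           Finset.univ.sup' Finset.univ_nonempty (fun a' => Qstar s' a')) := by
      rw [← h1, ← h2]
      simp only [mul_sub, Finset.sum_sub_distrib]
      ring
    rw [hdiff, abs_mul, abs_of_nonneg hγ0]
    apply mul_le_mul_of_nonneg_left _ hγ0
    calc |∑ s', p s a s' *
          (w * Real.log (∑ a', π₀ s' a' * Real.exp (Qw w s' a' / w)) -
           Finset.univ.sup' Finset.univ_nonempty (fun a' => Qstar s' a'))|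
        ≤ ∑ s', |p s a s' *
          (w * Real.log (∑ a', π₀ s' a' * Real.exp (Qw w s' a' / w)) -
           Finset.univ.sup' Finset.univ_nonempty (fun a' => Qstar s' a'))| :=
          Finset.abs_sum_le_sum_abs _ _
      _ ≤ ∑ s', p s a s' * (D + w * K) := by
          apply Finset.sum_le_sum
          intro s' _
          rw [abs_mul, abs_of_nonneg (hp_nonneg s a s')]
          exact mul_le_mul_of_nonneg_left (key s') (hp_nonneg s a s')
      _ = D + w * K := by rw [← Finset.sum_mul, hp_sum, one_mul]
  -- conclude
  have hwK1 : w * (K + 1) < ε * (1 - γ) := by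
    calc w * (K + 1) < (ε * (1 - γ) / (K + 1)) * (K + 1) := by
          apply mul_lt_mul_of_pos_right hwδ; positivity
      _ = ε * (1 - γ) := by field_simp
  have hDK : D * (1 - γ) ≤ γ * w * K := by nlinarith
  have h3 : γ * w * K ≤ w * (K + 1) := by
    nlinarith [mul_nonneg hw.le hK0, mul_nonneg (mul_nonneg hw.le hK0) (by linarith : (0:ℝ) ≤ 1 - γ)]
  have h1γ : 0 < 1 - γ := by linarith
  have hle : D * (1 - γ) ≤ ε * (1 - γ) := by linarith
  exact (mul_le_mul_iff_of_pos_right h1γ).mp hle
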